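/- arXiv:0804.1243 — 2 statements merged into one kernel-verified Lean document; each statement's English description precedes it below -/
import Mathlib

section
/- Let A ∈ SU(H) be such that its characteristic polynomial over L equals its minimal polynomial. Then Ā is conjugate to A^{-1} by an element of U(H) if and only if A = A_1 A_2 with A_1, A_2 ∈ U(H) satisfying Ā_1 A_1 = I = Ā_2 A_2. -/
open Matrix Polynomial
open scoped DirectSum

lemma sigma_invol {k L : Type*} [Field k] [Field L] [Algebra k L]
    (hchar : (2 : k) ≠ 0) (hquad : Module.finrank k L = 2)
    (σ : L ≃ₐ[k] L) (x : L) : σ (σ x) = x := by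
  by_cases hid : ∀ y, σ y = y
  · rw [hid, hid]
  push_neg at hid
  obtain ⟨x₀, hx₀⟩ := hid
  have hai : Function.Injective (algebraMap k L) := (algebraMap k L).injective
  have hnk : ∀ a : k, x₀ ≠ algebraMap k L a := by
    intro a ha
    exact hx₀ (by rw [ha, AlgEquiv.commutes])
  have key : ∀ u v : k, algebraMap k L u + algebraMap k L v * x₀ = 0 → u = 0 ∧ v = 0 := by
    intro u v huv
    by_cases hv : v = 0
    · subst hv
      simp only [map_zero, zero_mul, add_zero] at huv
      exact ⟨hai (by simpa using huv), rfl⟩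
    · exfalso
      have hv' : algebraMap k L v ≠ 0 := by
        simpa using fun h => hv (hai (by simpa using h))
      apply hnk ((-u) / v)
      rw [map_div₀, map_neg, eq_div_iff hv']
      linear_combination huv
  have hli : LinearIndependent k ![x₀, (1:L)] := by
    rw [linearIndependent_fin2]
    refine ⟨by simp, ?_⟩
    intro a ha
    apply hnk a
    have h1 : (![x₀, (1:L)]) 1 = 1 := rfl
    have h0 : (![x₀, (1:L)]) 0 = x₀ := rfl
    rw [h1, h0] at ha
    rw [← ha, Algebra.smul_def, mul_one]
  haveI : Nonempty (Fin 2) := ⟨0⟩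
  have hcard : Fintype.card (Fin 2) = Module.finrank k L := by simp [hquad]
  set b := basisOfLinearIndependentOfCardEqFinrank hli hcard with hb
  have hbc : ⇑b = ![x₀, (1:L)] := coe_basisOfLinearIndependentOfCardEqFinrank hli hcard
  have hspan : ∀ y : L, ∃ u v : k, y = algebraMap k L u + algebraMap k L v * x₀ := by
    intro y
    refine ⟨b.repr y 1, b.repr y 0, ?_⟩
    have hs := b.sum_repr y
    rw [Fin.sum_univ_two] at hs
    have h0 : b 0 = x₀ := by rw [hbc]; rfl
    have h1 : b 1 = (1:L) := by rw [hbc]; rfl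
    conv_lhs => rw [← hs]
    rw [h0, h1, Algebra.smul_def, Algebra.smul_def]
    ring
  have uniq : ∀ u v u' v' : k, algebraMap k L u + algebraMap k L v * x₀ =
      algebraMap k L u' + algebraMap k L v' * x₀ → u = u' ∧ v = v' := by
    intro u v u' v' h
    have h0 : algebraMap k L (u - u') + algebraMap k L (v - v') * x₀ = 0 := by
      rw [map_sub, map_sub]; linear_combination h
    obtain ⟨h1, h2⟩ := key _ _ h0
    exact ⟨sub_eq_zero.mp h1, sub_eq_zero.mp h2⟩
  -- now the algebra
  obtain ⟨a, bb, hab⟩ := hspan (σ x₀)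
  obtain ⟨c, d, hcd⟩ := hspan (x₀ * x₀)
  have hbb : bb ≠ 0 := by
    intro h0
    subst h0
    apply hx₀
    have : σ x₀ = σ (algebraMap k L a) := by
      rw [AlgEquiv.commutes, hab]; simp
    have := σ.injective this
    subst this
    rw [hab]; simp
  -- apply σ to hcd
  have hmul : σ (x₀ * x₀) = σ x₀ * σ x₀ := _root_.map_mul σ _ _
  have hlhs : σ (x₀ * x₀) = algebraMap k L c + algebraMap k L d * σ x₀ := by
    rw [hcd, map_add, _root_.map_mul, AlgEquiv.commutes, AlgEquiv.commutes]
  -- expand both sides in basis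
  have hrhs : σ x₀ * σ x₀ = algebraMap k L (a*a + bb*bb*c) + algebraMap k L (2*a*bb + bb*bb*d) * x₀ := by
    rw [hab]
    simp only [map_add, _root_.map_mul, map_ofNat]
    linear_combination ((algebraMap k L) bb * (algebraMap k L) bb) * hcd
  have hlhs2 : σ (x₀ * x₀) = algebraMap k L (c + d*a) + algebraMap k L (d*bb) * x₀ := by
    rw [hlhs, hab]
    simp only [map_add, _root_.map_mul]
    ring
  have heq : algebraMap k L (c + d*a) + algebraMap k L (d*bb) * x₀
      = algebraMap k L (a*a + bb*bb*c) + algebraMap k L (2*a*bb + bb*bb*d) * x₀ := by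
    rw [← hlhs2, ← hrhs, hmul]
  obtain ⟨e1, e2⟩ := uniq _ _ _ _ heq
  -- from e2 : d*bb = 2*a*bb + bb*bb*d, cancel bb: d = 2a + bb*d, so 2a = d(1-bb)
  have e2' : d = 2*a + bb*d := by
    have h' : bb * d = bb * (2*a + bb*d) := by linear_combination e2
    exact mul_left_cancel₀ hbb h'
  have hbb1 : bb ≠ 1 := by
    intro h1
    subst h1
    have h2 : 2*a = 0 := by linear_combination -e2'
    have ha0 : a = 0 := by
      rcases mul_eq_zero.mp h2 with h | h
      · exact absurd h hchar
      · exact h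
    subst ha0
    apply hx₀
    rw [hab]; simp
  have h2a : 2*a = d*(1-bb) := by linear_combination -e2'
  have hmain : (1 - bb*bb) * (4*c + d*d) = 0 := by
    linear_combination (4:k) * e1 + (2*a - d*(1+bb)) * h2a
  have hbbsq : bb * bb = 1 := by
    rcases mul_eq_zero.mp hmain with h | h
    · linear_combination -h
    · exfalso
      apply hnk (d/2)
      have h2L' : (algebraMap k L) (2:k) ≠ 0 := by
        simpa using fun hh => hchar (hai (by simpa using hh))
      set D := algebraMap k L d with hD
      have hx : (2*x₀ - D)^2 = 0 := by
        calc (2*x₀ - D)^2 = 4*(x₀*x₀) - 4*D*x₀ + D*D := by ring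
        _ = (algebraMap k L) (4*c + d*d) := by
            rw [hcd]; simp only [map_add, _root_.map_mul, map_ofNat]; ring
        _ = 0 := by rw [h, map_zero]
      have hx0 : 2*x₀ - D = 0 := by
        exact sq_eq_zero_iff.mp hx
      rw [map_div₀, eq_div_iff h2L', map_ofNat]
      linear_combination hx0
  have hbbm1 : bb = -1 := by
    have : (bb - 1) * (bb + 1) = 0 := by linear_combination hbbsq
    rcases mul_eq_zero.mp this with h | h
    · exact absurd (by linear_combination h) hbb1
    · linear_combination h
  -- σ² x₀ = a(1+bb) + bb² x₀ = x₀
  have hfix : σ (σ x₀) = x₀ := by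
    rw [hab, map_add, _root_.map_mul, AlgEquiv.commutes, AlgEquiv.commutes, hab, hbbm1, map_neg, _root_.map_one]
    ring
  -- conclude for arbitrary x
  obtain ⟨u, v, huv⟩ := hspan x
  rw [huv, map_add, _root_.map_mul, map_add, _root_.map_mul, AlgEquiv.commutes, AlgEquiv.commutes,
    AlgEquiv.commutes, AlgEquiv.commutes, hfix]

-- (∑ matrices) *ᵥ v
lemma sum_mulVec' {L : Type*} [CommRing L] {n : ℕ} {ι : Type*} (s : Finset ι)
    (M : ι → Matrix (Fin n) (Fin n) L) (v : Fin n → L) :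
    (∑ i ∈ s, M i) *ᵥ v = ∑ i ∈ s, (M i) *ᵥ v := by
  classical
  induction s using Finset.induction_on with
  | empty => simp [Matrix.zero_mulVec]
  | insert _ _ h ih => rw [Finset.sum_insert h, Finset.sum_insert h, Matrix.add_mulVec, ih]

lemma aeval_sum_monomial_mulVec {L : Type*} [Field L] {n : ℕ}
    (A : Matrix (Fin n) (Fin n) L) (c : Fin n → L) (v : Fin n → L) :
    (aeval A (∑ i : Fin n, (monomial (i : ℕ) (c i)))).mulVec v
      = ∑ i : Fin n, c i • ((A ^ (i : ℕ)) *ᵥ v) := by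
  rw [map_sum, sum_mulVec']
  refine Finset.sum_congr rfl fun i _ => ?_
  rw [aeval_monomial, Algebra.algebraMap_eq_smul_one, smul_mul_assoc, one_mul,
    Matrix.smul_mulVec]

lemma exists_cyclic {L : Type*} [Field L] {n : ℕ} (A : Matrix (Fin n) (Fin n) L)
    (hmin : A.charpoly = minpoly L A) :
    ∃ v₀ : Fin n → L, ∀ v : Fin n → L, ∃ p : Polynomial L, (aeval A p).mulVec v₀ = v := by
  classical
  rcases Nat.eq_zero_or_pos n with hn | hn
  · subst hn; exact ⟨0, fun v => ⟨0, Subsingleton.elim _ _⟩⟩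
  set φ : (Fin n → L) →ₗ[L] (Fin n → L) := Matrix.toLinAlgEquiv' A with hφ
  have haephi : ∀ p : Polynomial L, aeval φ p = Matrix.toLinAlgEquiv' (aeval A p) := by
    intro p
    exact Polynomial.aeval_algHom_apply (Matrix.toLinAlgEquiv' (R := L) (n := Fin n)) A p
  have hchne : A.charpoly ≠ 0 := (Matrix.charpoly_monic A).ne_zero
  have htor : Module.IsTorsion (Polynomial L) (Module.AEval' φ) := by
    intro x
    refine ⟨⟨A.charpoly, mem_nonZeroDivisors_of_ne_zero hchne⟩, ?_⟩
    apply (Module.AEval'.of φ).symm.injective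
    rw [Submonoid.smul_def, Module.AEval.of_symm_smul, haephi, Matrix.aeval_self_charpoly]
    simp
  obtain ⟨ι, hfin, p, hp, e, ⟨E⟩⟩ := Module.equiv_directSum_of_isTorsion htor
  haveI := hfin
  set w : ⨁ (i : ι), (Polynomial L ⧸ Submodule.span (Polynomial L) {p i ^ e i}) :=
    ∑ i : ι, DirectSum.lof (Polynomial L) ι _ i (Submodule.Quotient.mk 1) with hw
  set v₀ : Fin n → L := (Module.AEval'.of φ).symm (E.symm w) with hv₀
  have hsmul : ∀ (g : Polynomial L) (m : Module.AEval' φ),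
      (Module.AEval'.of φ).symm (g • m) = (aeval A g).mulVec ((Module.AEval'.of φ).symm m) := by
    intro g m
    rw [Module.AEval.of_symm_smul, haephi]
    rfl
  -- annihilator property
  have hann : ∀ g : Polynomial L, (aeval A g).mulVec v₀ = 0 → A.charpoly ∣ g := by
    intro g hg
    have h1 : g • (E.symm w) = 0 := by
      apply (Module.AEval'.of φ).symm.injective
      rw [hsmul, ← hv₀, hg]
      simp
    have h2 : g • w = 0 := by
      have := congrArg E h1
      rw [_root_.map_smul, E.apply_symm_apply, map_zero] at this
      exact this
    have h3 : ∀ i : ι, p i ^ e i ∣ g := by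
      intro i
      have hcomp : (g • w) i = g • (w i) := by rw [DFinsupp.smul_apply]
      have hwi : w i = Submodule.Quotient.mk 1 := by
        rw [hw, DFinsupp.finset_sum_apply]
        rw [Finset.sum_eq_single i]
        · rw [DirectSum.lof_apply]
        · intro j _ hj
          exact DFinsupp.single_eq_of_ne hj.symm
        · intro hi; exact absurd (Finset.mem_univ i) hi
      have : g • (Submodule.Quotient.mk (1 : Polynomial L) :
          Polynomial L ⧸ Submodule.span (Polynomial L) {p i ^ e i}) = 0 := by
        rw [← hwi, ← hcomp, h2, DFinsupp.zero_apply]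
      rw [← Submodule.Quotient.mk_smul, smul_eq_mul, mul_one, Submodule.Quotient.mk_eq_zero,
        Submodule.mem_span_singleton] at this
      obtain ⟨r, hr⟩ := this
      exact ⟨r, by rw [← hr, smul_eq_mul, mul_comm]⟩
    -- g annihilates everything
    have h4 : ∀ y : ⨁ (i : ι), (Polynomial L ⧸ Submodule.span (Polynomial L) {p i ^ e i}),
        g • y = 0 := by
      intro y
      induction y using DirectSum.induction_on with
      | zero => simp
      | of i x =>
        obtain ⟨r, rfl⟩ := Submodule.Quotient.mk_surjective _ x
        rw [← DirectSum.lof_eq_of (Polynomial L), ← _root_.map_smul]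
        have : g • (Submodule.Quotient.mk r : Polynomial L ⧸ Submodule.span (Polynomial L) {p i ^ e i}) = 0 := by
          rw [← Submodule.Quotient.mk_smul, Submodule.Quotient.mk_eq_zero, smul_eq_mul,
            Submodule.mem_span_singleton]
          obtain ⟨u, hu⟩ := h3 i
          exact ⟨u * r, by rw [smul_eq_mul]; rw [hu]; ring⟩
        rw [this, map_zero]
      | add x y hx hy => rw [smul_add, hx, hy, add_zero]
    have h5 : aeval A g = 0 := by
      apply (Matrix.toLinAlgEquiv' (R := L) (n := Fin n)).injective
      rw [map_zero]
      apply LinearMap.ext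
      intro v
      have hm : g • (Module.AEval'.of φ v) = 0 := by
        have := congrArg E.symm (h4 (E (Module.AEval'.of φ v)))
        rw [_root_.map_smul, E.symm_apply_apply, map_zero] at this
        exact this
      have := congrArg (Module.AEval'.of φ).symm hm
      rw [hsmul, map_zero] at this
      simpa using this
    rw [hmin]
    exact minpoly.dvd L A h5
  -- linear independence
  have hindep : LinearIndependent L (fun i : Fin n => (A ^ (i : ℕ)) *ᵥ v₀) := by
    rw [Fintype.linearIndependent_iff]
    intro c hc
    set g : Polynomial L := ∑ i : Fin n, (monomial (i : ℕ) (c i)) with hg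
    have hgv : (aeval A g).mulVec v₀ = 0 := by
      rw [hg, aeval_sum_monomial_mulVec, hc]
    have hdvd := hann g hgv
    have hg0 : g = 0 := by
      by_contra h0
      have hd1 : g.degree < (n : WithBot ℕ) := by
        refine lt_of_le_of_lt (Polynomial.degree_sum_le _ _) ?_
        refine (Finset.sup_lt_iff (α := WithBot ℕ) (WithBot.bot_lt_coe n)).mpr ?_
        intro i _
        exact lt_of_le_of_lt (Polynomial.degree_monomial_le _ _) (by exact Nat.cast_lt.mpr i.isLt)
      have hd2 := Polynomial.degree_le_of_dvd hdvd h0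
      rw [Matrix.charpoly_degree_eq_dim, Fintype.card_fin] at hd2
      exact absurd (lt_of_le_of_lt hd2 hd1) (lt_irrefl _)
    intro i
    have := congrArg (fun q => Polynomial.coeff q (i : ℕ)) hg0
    simp only [hg, Polynomial.finset_sum_coeff, Polynomial.coeff_monomial,
      Polynomial.coeff_zero] at this
    rw [Finset.sum_eq_single i] at this
    · simpa using this
    · intro j _ hj
      rw [if_neg (fun hh => hj (Fin.val_injective hh))]
    · intro hi; exact absurd (Finset.mem_univ i) hi
  -- span
  haveI : Nonempty (Fin n) := ⟨⟨0, hn⟩⟩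
  have hcard : Fintype.card (Fin n) = Module.finrank L (Fin n → L) := by
    simp [Module.finrank_pi]
  set b := basisOfLinearIndependentOfCardEqFinrank hindep hcard with hb
  have hbc : ⇑b = fun i : Fin n => (A ^ (i : ℕ)) *ᵥ v₀ :=
    coe_basisOfLinearIndependentOfCardEqFinrank hindep hcard
  refine ⟨v₀, fun v => ?_⟩
  refine ⟨∑ i : Fin n, (monomial (i : ℕ) (b.repr v i)), ?_⟩
  rw [aeval_sum_monomial_mulVec]
  calc ∑ i : Fin n, b.repr v i • ((A ^ (i:ℕ)) *ᵥ v₀)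
      = ∑ i : Fin n, b.repr v i • b i := by
        refine Finset.sum_congr rfl fun i _ => ?_
        rw [hbc]
    _ = v := b.sum_repr v

section helpers
variable {k L : Type*} [Field k] [Field L] [Algebra k L] {n : ℕ}

lemma mapσ_mul (σ : L ≃ₐ[k] L) (M N : Matrix (Fin n) (Fin n) L) :
    (M * N).map ⇑σ = M.map ⇑σ * N.map ⇑σ := by
  ext i j
  simp [Matrix.mul_apply, Matrix.map_apply, map_sum, _root_.map_mul]

lemma mapσ_one (σ : L ≃ₐ[k] L) : (1 : Matrix (Fin n) (Fin n) L).map ⇑σ = 1 := by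
  ext i j
  by_cases h : i = j <;> simp [Matrix.one_apply, h]

lemma mapσ_mapσ (σ : L ≃ₐ[k] L) (hσ2 : ∀ x, σ (σ x) = x) (M : Matrix (Fin n) (Fin n) L) :
    (M.map ⇑σ).map ⇑σ = M := by
  ext i j
  simp [Matrix.map_apply, hσ2]

lemma mapσ_smul (σ : L ≃ₐ[k] L) (c : L) (M : Matrix (Fin n) (Fin n) L) :
    (c • M).map ⇑σ = σ c • M.map ⇑σ := by
  ext i j
  simp [Matrix.map_apply, smul_eq_mul, _root_.map_mul]

lemma mapσ_sub (σ : L ≃ₐ[k] L) (M N : Matrix (Fin n) (Fin n) L) :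
    (M - N).map ⇑σ = M.map ⇑σ - N.map ⇑σ := by
  ext i j
  simp [Matrix.map_apply, map_sub]

lemma mapσ_inv (σ : L ≃ₐ[k] L) (M : Matrix (Fin n) (Fin n) L) (h : IsUnit M.det) :
    (M⁻¹).map ⇑σ = (M.map ⇑σ)⁻¹ := by
  have h1 : M.map ⇑σ * (M⁻¹).map ⇑σ = 1 := by
    rw [← mapσ_mul, Matrix.mul_nonsing_inv _ h, mapσ_one]
  exact (Matrix.inv_eq_right_inv h1).symm

lemma mapσ_det (σ : L ≃ₐ[k] L) (M : Matrix (Fin n) (Fin n) L) :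
    (M.map ⇑σ).det = σ M.det := by
  have := RingHom.map_det (σ : L →+* L) M
  rw [RingHom.mapMatrix_apply] at this
  exact this.symm

lemma map_mulVec' (σ : L ≃ₐ[k] L) (M : Matrix (Fin n) (Fin n) L) (v : Fin n → L) :
    (fun i => σ ((M *ᵥ v) i)) = (M.map ⇑σ) *ᵥ (fun i => σ (v i)) := by
  funext i
  simp [Matrix.mulVec, dotProduct, Matrix.map_apply, map_sum, _root_.map_mul]

lemma mulVec_dot (M : Matrix (Fin n) (Fin n) L) (u w : Fin n → L) :
    (M *ᵥ u) ⬝ᵥ w = u ⬝ᵥ (Mᵀ *ᵥ w) := by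
  rw [dotProduct_comm, Matrix.dotProduct_mulVec, ← Matrix.mulVec_transpose,
    dotProduct_comm]

lemma ext_of_mulVec {M N : Matrix (Fin n) (Fin n) L} (h : ∀ v, M *ᵥ v = N *ᵥ v) : M = N := by
  ext i j
  have := congrFun (h (Pi.single j 1)) i
  rw [Matrix.mulVec_single, Matrix.mulVec_single] at this
  simpa using this

lemma conjPow {X : Matrix (Fin n) (Fin n) L} (hX : IsUnit X.det)
    (M : Matrix (Fin n) (Fin n) L) (j : ℕ) : (X * M * X⁻¹) ^ j = X * M ^ j * X⁻¹ := by
  induction j with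
  | zero => rw [pow_zero, pow_zero, Matrix.mul_one, Matrix.mul_nonsing_inv X hX]
  | succ j ih =>
    rw [pow_succ, ih, pow_succ]
    calc X * M ^ j * X⁻¹ * (X * M * X⁻¹)
        = X * M ^ j * (X⁻¹ * X) * M * X⁻¹ := by simp only [Matrix.mul_assoc]
      _ = X * (M ^ j * M) * X⁻¹ := by
          rw [Matrix.nonsing_inv_mul X hX, Matrix.mul_one]
          simp only [Matrix.mul_assoc]

lemma aeval_conj {X : Matrix (Fin n) (Fin n) L} (hX : IsUnit X.det)
    (M : Matrix (Fin n) (Fin n) L) (p : Polynomial L) :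
    aeval (X * M * X⁻¹) p = X * aeval M p * X⁻¹ := by
  induction p using Polynomial.induction_on' with
  | add p q hp hq => rw [map_add, map_add, hp, hq, Matrix.mul_add, Matrix.add_mul]
  | monomial i a =>
    rw [aeval_monomial, aeval_monomial, conjPow hX, ← Algebra.smul_def, ← Algebra.smul_def,
      Matrix.mul_smul, Matrix.smul_mul]

lemma commute_aeval {A B : Matrix (Fin n) (Fin n) L} (h : A * B = B * A) (p : Polynomial L) :
    aeval A p * B = B * aeval A p := by
  induction p using Polynomial.induction_on' with
  | add p q hp hq => rw [map_add, Matrix.add_mul, Matrix.mul_add, hp, hq]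
  | monomial i a =>
    rw [aeval_monomial, ← Algebra.smul_def, Matrix.smul_mul, Matrix.mul_smul]
    congr 1
    exact (Commute.pow_left h i)

lemma mapσ_aeval (σ : L ≃ₐ[k] L) (A : Matrix (Fin n) (Fin n) L) (p : Polynomial L) :
    (aeval A p).map ⇑σ = aeval (A.map ⇑σ) (p.map (σ : L →+* L)) := by
  induction p using Polynomial.induction_on' with
  | add p q hp hq => rw [map_add, Polynomial.map_add, map_add, ← hp, ← hq]
                     ext i j
                     simp [Matrix.map_apply, map_add]
  | monomial i a =>
    rw [aeval_monomial, Polynomial.map_monomial, aeval_monomial, ← Algebra.smul_def,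
      ← Algebra.smul_def, mapσ_smul]
    congr 1
    induction i with
    | zero => rw [pow_zero, pow_zero, mapσ_one]
    | succ m ih => rw [pow_succ, pow_succ, mapσ_mul, ih]

end helpers

/-- For `A ∈ SU(H)` with characteristic polynomial equal to its minimal
polynomial, `Ā` is conjugate to `A⁻¹` by an element of `U(H)` iff `A = A₁ A₂` with
`A₁, A₂ ∈ U(H)` satisfying `Ā₁ A₁ = I = Ā₂ A₂`. -/
theorem stmt4 {k L : Type*} [Field k] [Field L] [Algebra k L]
    (hchar : (2 : k) ≠ 0) (hquad : Module.finrank k L = 2)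
    (σ : L ≃ₐ[k] L) (hσ : σ ≠ AlgEquiv.refl)
    {n : ℕ} (lam : Fin n → k) (hlam : ∀ i, lam i ≠ 0)
    (H : Matrix (Fin n) (Fin n) L)
    (hH : H = Matrix.diagonal fun i => algebraMap k L (lam i))
    (A : Matrix (Fin n) (Fin n) L) (hA_unit : IsUnit A)
    (hA_U : Aᵀ * H * A.map σ = H) (hA_det : A.det = 1)
    (hmin : A.charpoly = minpoly L A) :
    (∃ X : Matrix (Fin n) (Fin n) L, IsUnit X ∧ Xᵀ * H * X.map σ = H ∧
        X * A.map σ * X⁻¹ = A⁻¹) ↔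
    (∃ A₁ A₂ : Matrix (Fin n) (Fin n) L,
        IsUnit A₁ ∧ A₁ᵀ * H * A₁.map σ = H ∧
        IsUnit A₂ ∧ A₂ᵀ * H * A₂.map σ = H ∧
        A = A₁ * A₂ ∧ (A₁.map σ) * A₁ = 1 ∧ (A₂.map σ) * A₂ = 1) := by
  classical
  have hσ2 : ∀ x : L, σ (σ x) = x := sigma_invol hchar hquad σ
  have hainj : Function.Injective (algebraMap k L) := (algebraMap k L).injective
  have h2map : algebraMap k L 2 = 2 := map_ofNat _ 2
  have h2L : (2 : L) ≠ 0 := by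
    intro h
    exact hchar (hainj (by rw [map_zero, h2map]; exact h))
  have hAd : IsUnit A.det := (Matrix.isUnit_iff_isUnit_det A).mp hA_unit
  have hAσd : IsUnit (A.map ⇑σ).det := by rw [mapσ_det σ]; exact hAd.map σ
  have hAAi : A * A⁻¹ = 1 := Matrix.mul_nonsing_inv A hAd
  have hAiA : A⁻¹ * A = 1 := Matrix.nonsing_inv_mul A hAd
  subst hH
  set ℓ : Fin n → L := fun i => algebraMap k L (lam i) with hℓdef
  set Hm := Matrix.diagonal ℓ with hHm
  have hℓ0 : ∀ i, ℓ i ≠ 0 := by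
    intro i h
    exact hlam i (hainj (by rw [map_zero]; exact h))
  have hσℓ : ∀ i, σ (ℓ i) = ℓ i := fun i => σ.commutes (lam i)
  set Hinv := Matrix.diagonal (fun i => (ℓ i)⁻¹) with hHinvdef
  have hHHinv : Hm * Hinv = 1 := by
    rw [hHm, hHinvdef, Matrix.diagonal_mul_diagonal]
    have he : (fun i => ℓ i * (ℓ i)⁻¹) = fun _ => (1:L) := funext fun i => mul_inv_cancel₀ (hℓ0 i)
    rw [he, Matrix.diagonal_one]
  have hHinvH : Hinv * Hm = 1 := by
    rw [hHm, hHinvdef, Matrix.diagonal_mul_diagonal]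
    have he : (fun i => (ℓ i)⁻¹ * ℓ i) = fun _ => (1:L) := funext fun i => inv_mul_cancel₀ (hℓ0 i)
    rw [he, Matrix.diagonal_one]
  have hHt : Hmᵀ = Hm := Matrix.diagonal_transpose ℓ
  have hHσ : Hm.map ⇑σ = Hm := by
    rw [hHm, Matrix.diagonal_map (map_zero σ)]
    exact congrArg Matrix.diagonal (funext fun i => hσℓ i)
  have hHinvσ : Hinv.map ⇑σ = Hinv := by
    rw [hHinvdef, Matrix.diagonal_map (map_zero σ)]
    exact congrArg Matrix.diagonal (funext fun i => by rw [map_inv₀, hσℓ])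
  constructor
  · -- FORWARD
    rintro ⟨X, hXu, hXU, hXc⟩
    have hXd : IsUnit X.det := (Matrix.isUnit_iff_isUnit_det X).mp hXu
    have hXσd : IsUnit (X.map ⇑σ).det := by rw [mapσ_det σ]; exact hXd.map σ
    have hXXi : X * X⁻¹ = 1 := Matrix.mul_nonsing_inv X hXd
    have hXiX : X⁻¹ * X = 1 := Matrix.nonsing_inv_mul X hXd
    have hXσXσi : X.map ⇑σ * (X.map ⇑σ)⁻¹ = 1 := Matrix.mul_nonsing_inv _ hXσd
    have hXσiXσ : (X.map ⇑σ)⁻¹ * X.map ⇑σ = 1 := Matrix.nonsing_inv_mul _ hXσd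
    have hAσAσi : A.map ⇑σ * (A.map ⇑σ)⁻¹ = 1 := Matrix.mul_nonsing_inv _ hAσd
    have hAσiAσ : (A.map ⇑σ)⁻¹ * A.map ⇑σ = 1 := Matrix.nonsing_inv_mul _ hAσd
    -- conjugation identities
    have hc1 : X * (A.map ⇑σ)⁻¹ * X⁻¹ = A := by
      have h' := congrArg (fun M => M⁻¹) hXc
      simp only [Matrix.mul_inv_rev] at h'
      rw [Matrix.nonsing_inv_nonsing_inv X hXd, Matrix.nonsing_inv_nonsing_inv A hAd] at h'
      simp only [Matrix.mul_assoc]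
      exact h'
    have hc2 : X.map ⇑σ * A * (X.map ⇑σ)⁻¹ = (A.map ⇑σ)⁻¹ := by
      have := congrArg (fun M => M.map ⇑σ) hXc
      simp only [mapσ_mul] at this
      rw [mapσ_mapσ σ hσ2, mapσ_inv σ X hXd, mapσ_inv σ A hAd] at this
      exact this
    have hc2' : X.map ⇑σ * A = (A.map ⇑σ)⁻¹ * X.map ⇑σ := by
      calc X.map ⇑σ * A = X.map ⇑σ * A * ((X.map ⇑σ)⁻¹ * X.map ⇑σ) := by
            rw [hXσiXσ, Matrix.mul_one]
        _ = (X.map ⇑σ * A * (X.map ⇑σ)⁻¹) * X.map ⇑σ := by simp only [Matrix.mul_assoc]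
        _ = (A.map ⇑σ)⁻¹ * X.map ⇑σ := by rw [hc2]
    set B := X * X.map ⇑σ with hBdef
    have hBd : IsUnit B.det := by
      rw [hBdef, Matrix.det_mul]
      exact hXd.mul hXσd
    have hBA : B * A = A * B := by
      calc B * A = X * (X.map ⇑σ * A) := by rw [hBdef]; simp only [Matrix.mul_assoc]
        _ = X * ((A.map ⇑σ)⁻¹ * X.map ⇑σ) := by rw [hc2']
        _ = (X * (A.map ⇑σ)⁻¹ * X⁻¹) * (X * X.map ⇑σ) := by
            simp only [Matrix.mul_assoc]
            rw [← Matrix.mul_assoc X⁻¹ X, hXiX, Matrix.one_mul]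
        _ = A * B := by rw [hc1, hBdef]
    -- cyclic vector
    obtain ⟨v₀, hv₀⟩ := exists_cyclic A hmin
    -- B is a polynomial in A
    obtain ⟨pB, hpB⟩ : ∃ pB : Polynomial L, aeval A pB = B := by
      obtain ⟨pB, hpB⟩ := hv₀ (B *ᵥ v₀)
      refine ⟨pB, ext_of_mulVec fun v => ?_⟩
      obtain ⟨q, hq⟩ := hv₀ v
      rw [← hq, Matrix.mulVec_mulVec, Matrix.mulVec_mulVec, ← _root_.map_mul,
        mul_comm pB q, _root_.map_mul, ← Matrix.mulVec_mulVec, hpB,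
        Matrix.mulVec_mulVec, commute_aeval hBA.symm q]
    -- sharp operator
    set sharp : Matrix (Fin n) (Fin n) L → Matrix (Fin n) (Fin n) L :=
      fun M => Hinv * (M.map ⇑σ)ᵀ * Hm with hsharpdef
    have hsharp_mul : ∀ M N, sharp (M * N) = sharp N * sharp M := by
      intro M N
      rw [hsharpdef]
      simp only
      rw [mapσ_mul, Matrix.transpose_mul]
      calc Hinv * ((N.map ⇑σ)ᵀ * (M.map ⇑σ)ᵀ) * Hm
          = Hinv * (N.map ⇑σ)ᵀ * ((Hm * Hinv) * (M.map ⇑σ)ᵀ) * Hm := by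
            rw [hHHinv, Matrix.one_mul]; simp only [Matrix.mul_assoc]
        _ = Hinv * (N.map ⇑σ)ᵀ * Hm * (Hinv * (M.map ⇑σ)ᵀ * Hm) := by
            simp only [Matrix.mul_assoc]
    have hsharp_one : sharp 1 = 1 := by
      rw [hsharpdef]
      simp only
      rw [mapσ_one, Matrix.transpose_one, Matrix.mul_one, hHinvH]
    have hsharp_smul : ∀ (c : L) M, sharp (c • M) = σ c • sharp M := by
      intro c M
      rw [hsharpdef]
      simp only
      rw [mapσ_smul, Matrix.transpose_smul, Matrix.mul_smul, Matrix.smul_mul]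
    have hsharp_sub : ∀ M N, sharp (M - N) = sharp M - sharp N := by
      intro M N
      rw [hsharpdef]
      simp only
      rw [mapσ_sub, Matrix.transpose_sub, Matrix.mul_sub, Matrix.sub_mul]
    have hsharp_unitary : ∀ M : Matrix (Fin n) (Fin n) L, IsUnit M.det →
        Mᵀ * Hm * M.map ⇑σ = Hm → sharp M = M⁻¹ := by
      intro M hMd hMU
      have hMt : (M.map ⇑σ)ᵀ * Hm * M = Hm := by
        have := congrArg (fun N => Nᵀ) hMU
        simp only [Matrix.transpose_mul, hHt] at this
        rw [← Matrix.mul_assoc] at this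
        exact this
      rw [hsharpdef]
      simp only
      calc Hinv * (M.map ⇑σ)ᵀ * Hm
          = Hinv * (M.map ⇑σ)ᵀ * (Hm * (M * M⁻¹)) := by
            rw [Matrix.mul_nonsing_inv M hMd, Matrix.mul_one]
        _ = Hinv * ((M.map ⇑σ)ᵀ * Hm * M) * M⁻¹ := by simp only [Matrix.mul_assoc]
        _ = Hinv * Hm * M⁻¹ := by rw [hMt]
        _ = M⁻¹ := by rw [hHinvH, Matrix.one_mul]
    have hXσU : (X.map ⇑σ)ᵀ * Hm * (X.map ⇑σ).map ⇑σ = Hm := by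
      rw [mapσ_mapσ σ hσ2]
      have h := congrArg (fun N => N.map ⇑σ) hXU
      simp only [mapσ_mul, hHσ] at h
      rw [mapσ_mapσ σ hσ2 X, Matrix.transpose_map] at h
      exact h
    have hsharpX : sharp X = X⁻¹ := hsharp_unitary X hXd hXU
    have hsharpXσ : sharp (X.map ⇑σ) = (X.map ⇑σ)⁻¹ := hsharp_unitary _ hXσd hXσU
    have hsharpA : sharp A = A⁻¹ := hsharp_unitary A hAd hA_U
    have hsharp_add : ∀ M N, sharp (M + N) = sharp M + sharp N := by
      intro M N
      rw [hsharpdef]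
      simp only
      have hma : (M + N).map ⇑σ = M.map ⇑σ + N.map ⇑σ := by
        ext i j; simp [Matrix.map_apply, map_add]
      rw [hma, Matrix.transpose_add, Matrix.mul_add, Matrix.add_mul]
    have hsharp_powA : ∀ i : ℕ, sharp (A ^ i) = A⁻¹ ^ i := by
      intro i
      induction i with
      | zero => rw [pow_zero, pow_zero, hsharp_one]
      | succ m ih => rw [pow_succ, hsharp_mul, hsharpA, ih, pow_succ']
    have hmappow : ∀ i : ℕ, (A ^ i).map ⇑σ = (A.map ⇑σ) ^ i := by
      intro i
      induction i with
      | zero => rw [pow_zero, pow_zero, mapσ_one]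
      | succ m ih => rw [pow_succ, pow_succ, mapσ_mul, ih]
    have hconjpowA : ∀ i : ℕ, X * (A ^ i).map ⇑σ * X⁻¹ = A⁻¹ ^ i := by
      intro i
      rw [hmappow i, ← conjPow hXd, hXc]
    have hsharp_aeval : ∀ p : Polynomial L, sharp (aeval A p) = X * (aeval A p).map ⇑σ * X⁻¹ := by
      intro p
      induction p using Polynomial.induction_on' with
      | add p q hp hq =>
        have hma : ∀ M N : Matrix (Fin n) (Fin n) L, (M + N).map ⇑σ = M.map ⇑σ + N.map ⇑σ := by
          intro M N; ext i j; simp [Matrix.map_apply, map_add]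
        rw [map_add, hsharp_add, hma, Matrix.mul_add, Matrix.add_mul, hp, hq]
      | monomial i a =>
        rw [aeval_monomial, ← Algebra.smul_def, hsharp_smul, hsharp_powA, mapσ_smul,
          Matrix.mul_smul, Matrix.smul_mul, hconjpowA]
    have hsharpB : sharp B = B⁻¹ := by
      rw [hBdef, hsharp_mul, hsharpX, hsharpXσ, ← Matrix.mul_inv_rev]
    have hBσ : B.map ⇑σ = X.map ⇑σ * X := by rw [hBdef, mapσ_mul, mapσ_mapσ σ hσ2]
    have hsharpB' : sharp B = B := by
      rw [← hpB, hsharp_aeval, hpB, hBσ]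
      calc X * (X.map ⇑σ * X) * X⁻¹ = X * X.map ⇑σ * (X * X⁻¹) := by simp only [Matrix.mul_assoc]
        _ = B := by rw [hXXi, Matrix.mul_one, hBdef]
    have hBBi : B = B⁻¹ := hsharpB'.symm.trans hsharpB
    have hB2 : B * B = 1 := by
      nth_rewrite 2 [hBBi]
      exact Matrix.mul_nonsing_inv B hBd
    -- idempotent e
    set e : Matrix (Fin n) (Fin n) L := (2:L)⁻¹ • (1 - B) with hedef
    set pe : Polynomial L := Polynomial.C ((2:L)⁻¹) * (1 - pB) with hpedef
    have hpe : aeval A pe = e := by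
      rw [hpedef, _root_.map_mul, aeval_C, map_sub, _root_.map_one, hpB, hedef, ← Algebra.smul_def]
    have hBe : B * e = -e := by
      rw [hedef, Matrix.mul_smul, Matrix.mul_sub, Matrix.mul_one, hB2, ← smul_neg, neg_sub]
    have h1B : (1 - B) * (1 - B) = (2:L) • (1 - B) := by
      have hexp : (1 - B) * (1 - B) = 1 - B - B + B * B := by noncomm_ring
      rw [hexp, hB2, two_smul]
      abel
    have hee : e * e = e := by
      rw [hedef, Matrix.smul_mul, Matrix.mul_smul, h1B, smul_smul, smul_smul]
      congr 1
      rw [mul_assoc, inv_mul_cancel₀ h2L, mul_one]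
    have hσ2L : σ (2:L) = 2 := map_ofNat σ 2
    have hsharpe : sharp e = e := by
      rw [hedef, hsharp_smul, hsharp_sub, hsharp_one, hsharpB', map_inv₀, hσ2L]
    have hXe : X * e.map ⇑σ = e * X := by
      have hm1 : X * e.map ⇑σ * X⁻¹ = e := by
        rw [← hpe, ← hsharp_aeval, hpe, hsharpe]
      calc X * e.map ⇑σ = X * e.map ⇑σ * (X⁻¹ * X) := by rw [hXiX, Matrix.mul_one]
        _ = (X * e.map ⇑σ * X⁻¹) * X := by simp only [Matrix.mul_assoc]
        _ = e * X := by rw [hm1]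
    have hpoly_e : ∀ v : Fin n → L, X *ᵥ (fun i => σ ((e *ᵥ v) i)) = e *ᵥ (X *ᵥ (fun i => σ (v i))) := by
      intro v
      rw [map_mulVec' σ e v, Matrix.mulVec_mulVec, Matrix.mulVec_mulVec, hXe]
    -- the form and the semilinear map
    set F : (Fin n → L) → (Fin n → L) → L := fun u v => u ⬝ᵥ (Hm *ᵥ (fun i => σ (v i))) with hFdef
    set Φ : (Fin n → L) → (Fin n → L) := fun v => X *ᵥ (fun i => σ (v i)) with hΦdef
    have hFcomp : ∀ u v, F u v = ∑ i, u i * (ℓ i * σ (v i)) := by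
      intro u v
      rw [hFdef]
      simp only
      rw [hHm]
      refine Finset.sum_congr rfl fun i _ => ?_
      rw [Matrix.mulVec_diagonal]
    have hadj : ∀ (M : Matrix (Fin n) (Fin n) L) u v, F (M *ᵥ u) v = F u (sharp M *ᵥ v) := by
      intro M u v
      rw [hFdef]
      simp only
      rw [map_mulVec' σ (sharp M) v]
      have hsm : (sharp M).map ⇑σ = Hinv * Mᵀ * Hm := by
        rw [hsharpdef]
        simp only
        rw [mapσ_mul, mapσ_mul, hHσ, hHinvσ, ← Matrix.transpose_map, mapσ_mapσ σ hσ2]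
      rw [hsm, mulVec_dot, Matrix.mulVec_mulVec, Matrix.mulVec_mulVec]
      have hmm : Mᵀ * Hm = Hm * (Hinv * Mᵀ * Hm) := by
        calc Mᵀ * Hm = (Hm * Hinv) * Mᵀ * Hm := by rw [hHHinv, Matrix.one_mul]
          _ = Hm * (Hinv * Mᵀ * Hm) := by simp only [Matrix.mul_assoc]
      rw [hmm]
    have hherm : ∀ u v, F u v = σ (F v u) := by
      intro u v
      rw [hFcomp, hFcomp, map_sum]
      refine Finset.sum_congr rfl fun i _ => ?_
      rw [_root_.map_mul, _root_.map_mul, hσ2, hσℓ]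
      ring
    have hnondeg : ∀ w : Fin n → L, (∀ z, F w z = 0) → w = 0 := by
      intro w hw
      funext i
      have := hw (Pi.single i 1)
      rw [hFcomp] at this
      rw [Finset.sum_eq_single i] at this
      · rw [Pi.single_eq_same, _root_.map_one, mul_one] at this
        rcases mul_eq_zero.mp this with h | h
        · exact h
        · exact absurd h (hℓ0 i)
      · intro j _ hj
        rw [Pi.single_eq_of_ne hj, map_zero, mul_zero, mul_zero]
      · intro hi; exact absurd (Finset.mem_univ i) hi
    have hφform : ∀ u v, F (Φ u) (Φ v) = σ (F u v) := by
      intro u v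
      rw [hΦdef]
      simp only
      have hin : (fun i => σ ((X *ᵥ fun j => σ (v j)) i)) = (X.map ⇑σ) *ᵥ v := by
        rw [map_mulVec' σ X (fun j => σ (v j))]
        simp only [hσ2]
      rw [hFdef]
      simp only
      rw [hin, mulVec_dot, Matrix.mulVec_mulVec, Matrix.mulVec_mulVec, hXU]
      have hdR : (u ⬝ᵥ (Hm *ᵥ fun i => σ (v i))) = ∑ i, u i * (ℓ i * σ (v i)) := by
        rw [hHm]
        refine Finset.sum_congr rfl fun i _ => ?_
        rw [Matrix.mulVec_diagonal]
      rw [hdR, map_sum, hHm]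
      refine Finset.sum_congr rfl fun i _ => ?_
      rw [Matrix.mulVec_diagonal, _root_.map_mul, _root_.map_mul, hσℓ, hσ2]
    have hΦΦ : ∀ v, Φ (Φ v) = B *ᵥ v := by
      intro v
      rw [hΦdef]
      simp only
      rw [map_mulVec' σ X (fun j => σ (v j)), Matrix.mulVec_mulVec, ← hBdef]
      simp only [hσ2]
    have hΦadd : ∀ u v, Φ (u + v) = Φ u + Φ v := by
      intro u v
      rw [hΦdef]
      simp only
      have : (fun i => σ ((u + v) i)) = (fun i => σ (u i)) + (fun i => σ (v i)) := by
        funext i; simp [map_add]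
      rw [this, Matrix.mulVec_add]
    have hΦe : ∀ v, Φ (e *ᵥ v) = e *ᵥ Φ v := by
      intro v
      rw [hΦdef]
      simp only
      exact hpoly_e v
    -- S1
    have hS1 : ∀ v, F (e *ᵥ v) (Φ (e *ᵥ v)) = 0 := by
      intro v
      set w := e *ᵥ v with hwdef
      have hBw : B *ᵥ w = -w := by
        rw [hwdef, Matrix.mulVec_mulVec, hBe, Matrix.neg_mulVec]
      have h6 : Φ (Φ w) = -w := by rw [hΦΦ, hBw]
      have hP6 := hφform w (Φ w)
      rw [h6] at hP6
      have hFneg : F (Φ w) (-w) = - F (Φ w) w := by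
        rw [hFcomp, hFcomp, ← Finset.sum_neg_distrib]
        refine Finset.sum_congr rfl fun i _ => ?_
        simp [map_neg]
      rw [hFneg, hherm (Φ w) w] at hP6
      have h2x : (2:L) * σ (F w (Φ w)) = 0 := by linear_combination - hP6
      rcases mul_eq_zero.mp h2x with h | h
      · exact absurd h h2L
      · have := congrArg σ.symm h
        rw [AlgEquiv.symm_apply_apply, map_zero] at this
        exact this
    -- S2
    have hS2 : ∀ (q : Polynomial L) u v,
        F ((aeval A q) *ᵥ u) (Φ v) = F u (Φ ((aeval A q) *ᵥ v)) := by
      intro q u v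
      have hmx : X * (aeval A q).map ⇑σ = sharp (aeval A q) * X := by
        rw [hsharp_aeval]
        calc X * (aeval A q).map ⇑σ = X * (aeval A q).map ⇑σ * (X⁻¹ * X) := by
              rw [hXiX, Matrix.mul_one]
          _ = X * (aeval A q).map ⇑σ * X⁻¹ * X := by simp only [Matrix.mul_assoc]
      have hv2 : Φ ((aeval A q) *ᵥ v) = sharp (aeval A q) *ᵥ Φ v := by
        rw [hΦdef]
        simp only
        rw [map_mulVec' σ (aeval A q) v, Matrix.mulVec_mulVec, Matrix.mulVec_mulVec, hmx]
      rw [hadj, hv2]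
    -- S5
    have hS5 : ∀ u v, F (e *ᵥ u) (Φ (e *ᵥ v)) = 0 := by
      have hsym : ∀ u v, F (e *ᵥ u) (Φ (e *ᵥ v)) = F (e *ᵥ v) (Φ (e *ᵥ u)) := by
        intro u v
        obtain ⟨p, hp⟩ := hv₀ u
        obtain ⟨q, hq⟩ := hv₀ v
        have he1 : e *ᵥ u = (aeval A (pe * p)) *ᵥ v₀ := by
          rw [← hp, Matrix.mulVec_mulVec, ← hpe, ← _root_.map_mul]
        have he2 : e *ᵥ v = (aeval A (pe * q)) *ᵥ v₀ := by
          rw [← hq, Matrix.mulVec_mulVec, ← hpe, ← _root_.map_mul]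
        rw [he1, he2, hS2 (pe * p) v₀ ((aeval A (pe*q)) *ᵥ v₀),
          hS2 (pe * q) v₀ ((aeval A (pe*p)) *ᵥ v₀)]
        rw [Matrix.mulVec_mulVec, Matrix.mulVec_mulVec, ← _root_.map_mul, ← _root_.map_mul,
          mul_comm (pe * p) (pe * q)]
      have hanti : ∀ u v, F (e *ᵥ u) (Φ (e *ᵥ v)) + F (e *ᵥ v) (Φ (e *ᵥ u)) = 0 := by
        intro u v
        have h0 := hS1 (u + v)
        rw [Matrix.mulVec_add, hΦadd] at h0
        have hFexp : ∀ a b c d : Fin n → L, F (a + b) (c + d)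
            = F a c + F a d + F b c + F b d := by
          intro a b c d
          simp only [hFcomp]
          rw [← Finset.sum_add_distrib, ← Finset.sum_add_distrib, ← Finset.sum_add_distrib]
          refine Finset.sum_congr rfl fun i _ => ?_
          simp only [Pi.add_apply, map_add]
          ring
        rw [hFexp, hS1 u, hS1 v] at h0
        linear_combination h0
      intro u v
      have h1 := hsym u v
      have h2 := hanti u v
      have h2' : (2:L) * F (e *ᵥ u) (Φ (e *ᵥ v)) = 0 := by linear_combination h2 + h1
      rcases mul_eq_zero.mp h2' with h | h
      · exact absurd h h2L
      · exact h
    -- S6 : e = 0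
    have he0 : e = 0 := by
      apply ext_of_mulVec
      intro v
      rw [Matrix.zero_mulVec]
      apply hnondeg
      intro z
      set u' : Fin n → L := fun i => σ ((X⁻¹ *ᵥ z) i) with hu'def
      have hΦu' : Φ u' = z := by
        rw [hΦdef]
        simp only
        have : (fun i => σ (u' i)) = X⁻¹ *ᵥ z := by
          funext i
          rw [hu'def]
          simp only
          rw [hσ2]
        rw [this, Matrix.mulVec_mulVec, hXXi, Matrix.one_mulVec]
      have hev : e *ᵥ v = e *ᵥ (e *ᵥ v) := by
        rw [Matrix.mulVec_mulVec, hee]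
      rw [hev, ← hΦu']
      have heu' : Φ u' = Φ ((1 : Matrix (Fin n) (Fin n) L) *ᵥ u') := by
        rw [Matrix.one_mulVec]
      calc F (e *ᵥ (e *ᵥ v)) (Φ u')
          = F ((aeval A pe) *ᵥ (e *ᵥ v)) (Φ u') := by rw [hpe]
        _ = F (e *ᵥ v) (Φ ((aeval A pe) *ᵥ u')) := hS2 pe (e *ᵥ v) u'
        _ = F (e *ᵥ v) (Φ (e *ᵥ u')) := by rw [hpe]
        _ = 0 := hS5 v u'
    have hB1 : B = 1 := by
      have h1B0 : (1:Matrix (Fin n) (Fin n) L) - B = 0 := by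
        have := he0
        rw [hedef, smul_eq_zero] at this
        rcases this with h | h
        · exact absurd h (inv_ne_zero h2L)
        · exact h
      have := sub_eq_zero.mp h1B0
      exact this.symm
    have hXσX : X.map ⇑σ * X = 1 := by
      rw [← mul_eq_one_comm, ← hBdef, hB1]
    -- assemble
    refine ⟨A * X, X⁻¹, hA_unit.mul hXu, ?_, ?_, ?_, ?_, ?_, ?_⟩
    · -- (A*X) unitary
      rw [Matrix.transpose_mul, mapσ_mul]
      calc Xᵀ * Aᵀ * Hm * (A.map ⇑σ * X.map ⇑σ)
          = Xᵀ * (Aᵀ * Hm * A.map ⇑σ) * X.map ⇑σ := by simp only [Matrix.mul_assoc]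
        _ = Xᵀ * Hm * X.map ⇑σ := by rw [hA_U]
        _ = Hm := hXU
    · -- X⁻¹ unit
      exact ⟨⟨X⁻¹, X, hXiX, hXXi⟩, rfl⟩
    · -- X⁻¹ unitary
      rw [Matrix.transpose_nonsing_inv, mapσ_inv σ X hXd]
      conv_lhs => rw [← hXU]
      have hXtd : IsUnit (Xᵀ).det := by rw [Matrix.det_transpose]; exact hXd
      calc Xᵀ⁻¹ * (Xᵀ * Hm * X.map ⇑σ) * (X.map ⇑σ)⁻¹
          = (Xᵀ⁻¹ * Xᵀ) * Hm * (X.map ⇑σ * (X.map ⇑σ)⁻¹) := by simp only [Matrix.mul_assoc]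
        _ = Hm := by rw [Matrix.nonsing_inv_mul _ hXtd, hXσXσi, Matrix.one_mul, Matrix.mul_one]
    · -- A = (A*X) * X⁻¹
      rw [Matrix.mul_assoc, hXXi, Matrix.mul_one]
    · -- (A*X).map σ * (A*X) = 1
      rw [mapσ_mul]
      calc A.map ⇑σ * X.map ⇑σ * (A * X)
          = A.map ⇑σ * (X.map ⇑σ * A) * X := by simp only [Matrix.mul_assoc]
        _ = A.map ⇑σ * ((A.map ⇑σ)⁻¹ * X.map ⇑σ) * X := by rw [hc2']
        _ = (A.map ⇑σ * (A.map ⇑σ)⁻¹) * (X.map ⇑σ * X) := by simp only [Matrix.mul_assoc]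
        _ = 1 := by rw [hAσAσi, hXσX, Matrix.mul_one]
    · -- (X⁻¹).map σ * X⁻¹ = 1
      rw [mapσ_inv σ X hXd, ← Matrix.mul_inv_rev, ← hBdef, hB1]
      exact Matrix.inv_eq_left_inv (by rw [Matrix.one_mul])
  · -- BACKWARD
    rintro ⟨A₁, A₂, hu1, hU1, hu2, hU2, hAe, hb1, hb2⟩
    refine ⟨A₁, hu1, hU1, ?_⟩
    have hd1 : IsUnit A₁.det := (Matrix.isUnit_iff_isUnit_det A₁).mp hu1
    have hd2 : IsUnit A₂.det := (Matrix.isUnit_iff_isUnit_det A₂).mp hu2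
    have hinv1 : A₁⁻¹ = A₁.map ⇑σ := Matrix.inv_eq_left_inv hb1
    have hinv2 : A₂⁻¹ = A₂.map ⇑σ := Matrix.inv_eq_left_inv hb2
    have hA11 : A₁ * A₁⁻¹ = 1 := Matrix.mul_nonsing_inv A₁ hd1
    rw [hAe, mapσ_mul, Matrix.mul_inv_rev, ← hinv1, ← hinv2]
    calc A₁ * (A₁⁻¹ * A₂⁻¹) * A₁⁻¹ = (A₁ * A₁⁻¹) * (A₂⁻¹ * A₁⁻¹) := by
          simp only [Matrix.mul_assoc]
      _ = A₂⁻¹ * A₁⁻¹ := by rw [hA11, Matrix.one_mul]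
end

section
/- Let A ∈ SU(H) be such that its characteristic polynomial over L equals its minimal polynomial. Then Ā is conjugate to A^{-1} by an element of SU(H) if and only if A = A_1 A_2 with A_1, A_2 ∈ SU(H) satisfying Ā_1 A_1 = I = Ā_2 A_2. -/
open Matrix Polynomial

section Helpers

variable {k L : Type*} [Field k] [Field L] [Algebra k L]

private lemma sigma_invol_s5 (hquad : Module.finrank k L = 2)
    (σ : L ≃ₐ[k] L) (hσ : σ ≠ AlgEquiv.refl) : ∀ y : L, σ (σ y) = y := by
  have hfd : FiniteDimensional k L := FiniteDimensional.of_finrank_eq_succ (n := 1) hquad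
  have hinj := (algebraMap k L).injective
  obtain ⟨x, hx⟩ : ∃ x : L, σ x ≠ x := by
    by_contra h
    push_neg at h
    exact hσ (AlgEquiv.ext fun y => h y)
  have hxk : ∀ c : k, algebraMap k L c ≠ x := by
    intro c hc
    exact hx (by rw [← hc, AlgEquiv.commutes])
  set p := minpoly k x with hp
  have hpmonic : p.Monic := minpoly.monic (IsIntegral.of_finite k x)
  have hdle : p.natDegree ≤ 2 := hquad ▸ minpoly.natDegree_le x
  have hdpos : 0 < p.natDegree := minpoly.natDegree_pos (IsIntegral.of_finite k x)
  have hd2 : p.natDegree = 2 := by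
    rcases Nat.lt_or_ge p.natDegree 2 with h | h
    · exfalso
      have h1 : p.natDegree = 1 := by omega
      have hx0 : aeval x p = 0 := minpoly.aeval k x
      have hsum := Polynomial.aeval_eq_sum_range (R := k) (S := L) (p := p) x
      rw [h1] at hsum
      rw [hsum] at hx0
      have hc1 : p.coeff 1 = 1 := by
        have := hpmonic
        rwa [Polynomial.Monic, Polynomial.leadingCoeff, h1] at this
      have h0 : algebraMap k L (p.coeff 0) + x = 0 := by
        rw [Finset.sum_range_succ, Finset.sum_range_succ, Finset.sum_range_zero, hc1] at hx0
        rw [Algebra.smul_def] at hx0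
        simpa using hx0
      exact hxk (-(p.coeff 0)) (by rw [map_neg]; linear_combination -h0)
    · omega
  have hx0 : aeval x p = 0 := minpoly.aeval k x
  have hσx0 : aeval (σ x) p = 0 := by
    have := Polynomial.aeval_algHom_apply (σ : L →ₐ[k] L) x p
    change aeval (σ x) p = (σ : L →ₐ[k] L) (aeval x p) at this
    rw [this, hx0, map_zero]
  have hrel : ∀ y : L, aeval y p = 0 →
      y ^ 2 + (algebraMap k L (p.coeff 1)) * y + algebraMap k L (p.coeff 0) = 0 := by
    intro y hy
    have hsum := Polynomial.aeval_eq_sum_range (R := k) (S := L) (p := p) y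
    rw [hd2] at hsum
    rw [hsum] at hy
    have hc2 : p.coeff 2 = 1 := by
      have := hpmonic
      rwa [Polynomial.Monic, Polynomial.leadingCoeff, hd2] at this
    rw [Finset.sum_range_succ, Finset.sum_range_succ, Finset.sum_range_succ,
      Finset.sum_range_zero, hc2, one_smul, Algebra.smul_def, Algebra.smul_def] at hy
    linear_combination hy
  have h1 := hrel x hx0
  have h2 := hrel (σ x) hσx0
  have hfac : (x - σ x) * (x + σ x + algebraMap k L (p.coeff 1)) = 0 := by
    linear_combination h1 - h2
  have hsum : x + σ x + algebraMap k L (p.coeff 1) = 0 := by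
    rcases mul_eq_zero.mp hfac with h | h
    · exact absurd (sub_eq_zero.mp h).symm hx
    · exact h
  have hσσx : σ (σ x) = x := by
    have hσx : σ x = -x - algebraMap k L (p.coeff 1) := by linear_combination hsum
    rw [hσx, map_sub, map_neg, AlgEquiv.commutes, hσx]
    ring
  have hli : LinearIndependent k ![(1 : L), x] := by
    rw [LinearIndependent.pair_iff]
    intro s t hst
    have hst' : algebraMap k L s + algebraMap k L t * x = 0 := by
      rw [Algebra.smul_def, Algebra.smul_def] at hst
      simpa using hst
    by_cases ht : t = 0
    · subst ht
      have hs : s = 0 := hinj (by simpa using hst')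
      exact ⟨hs, rfl⟩
    · exfalso
      apply hxk (-(s/t))
      have htL : algebraMap k L t ≠ 0 := fun h => ht (hinj (by simpa using h))
      rw [map_neg, map_div₀]
      field_simp
      linear_combination -hst'
  have hspan := hli.span_eq_top_of_card_eq_finrank'
    (by simp [hquad, Module.finrank_self] )
  intro y
  have hy : y ∈ Submodule.span k (Set.range ![(1:L), x]) := by rw [hspan]; trivial
  induction hy using Submodule.span_induction with
  | mem z hz =>
      obtain ⟨i, rfl⟩ := hz
      fin_cases i
      · simp
      · simpa using hσσx
  | zero => simp
  | add a b _ _ ha hb => rw [map_add, map_add, ha, hb]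
  | smul c a _ ha =>
      rw [_root_.map_smul, _root_.map_smul, ha]

end Helpers

private lemma exists_cyclic_s5 {L : Type*} [Field L] {n : ℕ} (A : Matrix (Fin n) (Fin n) L)
    (hmin : A.charpoly = minpoly L A) :
    ∃ w : Fin n → L, Submodule.span L (Set.range fun i : ℕ => (A ^ i) *ᵥ w) = ⊤ := by
  classical
  rcases Nat.eq_zero_or_pos n with hn | hn
  · subst hn
    refine ⟨0, ?_⟩
    rw [Submodule.eq_top_iff']
    intro v
    have hv : v = 0 := funext fun i => i.elim0
    rw [hv]
    exact Submodule.zero_mem _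
  set f := minpoly L A with hfdef
  have hmono : f.Monic := hmin ▸ A.charpoly_monic
  have hf0 : f ≠ 0 := hmono.ne_zero
  have hdeg : f.natDegree = n := by
    rw [← hmin, A.charpoly_natDegree_eq_dim, Fintype.card_fin]
  have hdvd : ∀ g : L[X], aeval A g = 0 → f ∣ g := fun g hg => minpoly.dvd L A hg
  have hfA : aeval A f = 0 := minpoly.aeval L A
  set F := UniqueFactorizationMonoid.normalizedFactors f with hF
  set S := F.toFinset with hS
  have hprime : ∀ p ∈ S, Prime p := fun p hp =>
    UniqueFactorizationMonoid.prime_of_normalized_factor p (Multiset.mem_toFinset.mp hp)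
  have hfactors_monic : F.prod.Monic := by
    have hm : ∀ q ∈ F, q.Monic := by
      intro q hq
      rw [← UniqueFactorizationMonoid.normalize_normalized_factor q hq]
      exact Polynomial.monic_normalize
        (UniqueFactorizationMonoid.prime_of_normalized_factor q hq).ne_zero
    rw [← Multiset.map_id F]
    exact Polynomial.monic_multiset_prod_of_monic _ _ (fun q hq => hm q hq)
  have hfprod : f = ∏ p ∈ S, p ^ F.count p := by
    rw [← Finset.prod_multiset_count]
    exact (Polynomial.eq_of_monic_of_associated hfactors_monic hmono
      (UniqueFactorizationMonoid.prod_normalizedFactors hf0)).symm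
  set e : L[X] → ℕ := fun p => F.count p with he
  set s : L[X] → L[X] := fun p => ∏ q ∈ S.erase p, q ^ F.count q with hsdef
  have hps : ∀ p ∈ S, p ^ e p * s p = f := fun p hp => by
    rw [hfprod]
    exact Finset.mul_prod_erase S (fun q => q ^ F.count q) hp
  have hepos : ∀ p ∈ S, 1 ≤ e p := fun p hp =>
    Multiset.one_le_count_iff_mem.mpr (Multiset.mem_toFinset.mp hp)
  have hpeq : ∀ p ∈ S, ∀ q ∈ S, p ∣ q → p = q := by
    intro p hp q hq hdq
    have hassoc : Associated p q :=
      (hprime p hp).irreducible.associated_of_dvd (hprime q hq).irreducible hdq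
    rw [← UniqueFactorizationMonoid.normalize_normalized_factor p (Multiset.mem_toFinset.mp hp),
        ← UniqueFactorizationMonoid.normalize_normalized_factor q (Multiset.mem_toFinset.mp hq)]
    exact normalize_eq_normalize hassoc.dvd hassoc.symm.dvd
  have hnotdvd : ∀ p ∈ S, ¬ p ∣ s p := by
    intro p hp hdvd'
    obtain ⟨q, hq, hdq⟩ := (hprime p hp).exists_mem_finset_dvd hdvd'
    have hq' : q ∈ S := Finset.mem_of_mem_erase hq
    have hpq : p = q := hpeq p hp q hq' ((hprime p hp).dvd_of_dvd_pow hdq)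
    exact (Finset.ne_of_mem_erase hq) hpq.symm
  have hs0 : ∀ p ∈ S, s p ≠ 0 := by
    intro p hp h0
    apply hf0
    rw [← hps p hp, h0, mul_zero]
  have hB : ∀ p ∈ S, aeval A (s p * p ^ (e p - 1)) ≠ 0 := by
    intro p hp h0
    have hp0 : p ≠ 0 := (hprime p hp).ne_zero
    have hpd : 0 < p.natDegree := (hprime p hp).irreducible.natDegree_pos
    have hne : s p * p ^ (e p - 1) ≠ 0 := mul_ne_zero (hs0 p hp) (pow_ne_zero _ hp0)
    have h1 : f.natDegree ≤ (s p * p ^ (e p - 1)).natDegree :=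
      Polynomial.natDegree_le_of_dvd (hdvd _ h0) hne
    rw [← hps p hp, Polynomial.natDegree_mul (pow_ne_zero _ hp0) (hs0 p hp),
      Polynomial.natDegree_mul (hs0 p hp) (pow_ne_zero _ hp0),
      Polynomial.natDegree_pow, Polynomial.natDegree_pow] at h1
    have h1e := hepos p hp
    have hlt : (e p - 1) * p.natDegree < e p * p.natDegree :=
      (Nat.mul_lt_mul_right hpd).mpr (by omega)
    omega
  have hv : ∀ p : L[X], ∃ vv : Fin n → L,
      p ∈ S → (aeval A (s p * p ^ (e p - 1))) *ᵥ vv ≠ 0 := by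
    intro p
    by_cases hp : p ∈ S
    · by_contra hcon
      push_neg at hcon
      apply hB p hp
      ext i j
      have := congrFun (hcon (Pi.single j 1)).2 i
      simpa [Matrix.mulVec_single] using this
    · exact ⟨0, fun h => absurd h hp⟩
  choose v hvne using hv
  set w : Fin n → L := ∑ p ∈ S, (aeval A (s p)) *ᵥ v p with hw
  have hsummv : ∀ (B : Matrix (Fin n) (Fin n) L),
      B *ᵥ w = ∑ p ∈ S, (B * (aeval A (s p))) *ᵥ v p := by
    intro B
    rw [hw]
    induction S using Finset.induction_on with
    | empty => simp
    | @insert a T hnotmem ih =>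
        rw [Finset.sum_insert hnotmem, Finset.sum_insert hnotmem, Matrix.mulVec_add, ih,
          Matrix.mulVec_mulVec]
  have hkey : ∀ g : L[X], (aeval A g) *ᵥ w = 0 → f ∣ g := by
    intro g hg
    rw [hfprod]
    apply Finset.prod_dvd_of_coprime
    · intro p hp q hq hpq
      simp only [Function.onFun]
      apply IsCoprime.pow
      rw [(hprime p hp).irreducible.coprime_iff_not_dvd]
      intro hdq
      exact hpq (hpeq p hp q hq hdq)
    · intro p hp
      -- reduce to the p-th term
      have h1 : (aeval A (s p)) *ᵥ ((aeval A g) *ᵥ w) = 0 := by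
        rw [hg, Matrix.mulVec_zero]
      rw [Matrix.mulVec_mulVec, ← _root_.map_mul, hsummv] at h1
      have hterm : ∀ q ∈ S, q ≠ p →
          (aeval A (s p * g) * aeval A (s q)) *ᵥ v q = 0 := by
        intro q hq hqp
        have hps' : (fun q => q ^ F.count q) p ∣ s q := by
          apply Finset.dvd_prod_of_mem
          exact Finset.mem_erase.mpr ⟨fun h => hqp h.symm, hp⟩
        obtain ⟨u, hu⟩ := hps'
        have hXq : aeval A (s p * g) * aeval A (s q) = aeval A (g * u) * aeval A f := by
          rw [← _root_.map_mul, ← _root_.map_mul]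
          congr 1
          rw [← hps p hp, hu]
          show s p * g * (p ^ F.count p * u) = g * u * (p ^ e p * s p)
          ring
        rw [hXq, hfA, mul_zero, Matrix.zero_mulVec]
      have h2 : (aeval A (s p * g) * aeval A (s p)) *ᵥ v p = 0 := by
        rw [Finset.sum_eq_single_of_mem p hp (fun q hq hqp =>
          hterm q hq hqp)] at h1
        exact h1
      -- annihilator claim
      have hannp : ∀ h : L[X], (aeval A (h * s p)) *ᵥ v p = 0 → p ^ e p ∣ h := by
        intro h hh
        have hgcd := EuclideanDomain.gcd_eq_gcd_ab h (p ^ e p)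
        set d := EuclideanDomain.gcd h (p ^ e p) with hd
        have hdd : (aeval A (d * s p)) *ᵥ v p = 0 := by
          have hexp : aeval A (d * s p)
              = aeval A (EuclideanDomain.gcdA h (p ^ e p)) * aeval A (h * s p)
              + aeval A (EuclideanDomain.gcdB h (p ^ e p)) * aeval A f := by
            rw [← _root_.map_mul, ← _root_.map_mul, ← map_add]
            congr 1
            rw [← hps p hp, hgcd]
            ring
          rw [hexp, hfA, mul_zero, add_zero, ← Matrix.mulVec_mulVec, hh, Matrix.mulVec_zero]
        obtain ⟨j, hj, hdj⟩ := (dvd_prime_pow (hprime p hp) _).mp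
          (EuclideanDomain.gcd_dvd_right h (p ^ e p))
        rcases eq_or_lt_of_le hj with hje | hjl
        · have : p ^ e p ∣ d := hje ▸ hdj.symm.dvd
          exact this.trans (EuclideanDomain.gcd_dvd_left h (p ^ e p))
        · exfalso
          have hd1 : d ∣ p ^ (e p - 1) := hdj.dvd.trans (pow_dvd_pow p (by omega))
          obtain ⟨t, ht⟩ := hd1
          apply hvne p hp
          have hX : aeval A (s p * p ^ (e p - 1)) = aeval A t * aeval A (d * s p) := by
            rw [← _root_.map_mul]
            congr 1
            rw [ht]
            ring
          rw [hX, ← Matrix.mulVec_mulVec, hdd, Matrix.mulVec_zero]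
      have hps2 : p ^ e p ∣ g * s p := by
        apply hannp
        have hX : aeval A (g * s p * s p) = aeval A (s p * g) * aeval A (s p) := by
          rw [← _root_.map_mul]
          congr 1
          ring
        rw [hX]
        exact h2
      have hcop : IsCoprime (p ^ e p) (s p) :=
        ((hprime p hp).irreducible.coprime_iff_not_dvd.mpr (hnotdvd p hp)).pow_left
      exact hcop.dvd_of_dvd_mul_right hps2
  -- linear independence
  have hli : LinearIndependent L (fun i : Fin n => (A ^ (i : ℕ)) *ᵥ w) := by
    rw [Fintype.linearIndependent_iff]
    intro c hc
    set g : L[X] := ∑ j : Fin n, C (c j) * X ^ (j : ℕ) with hg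
    have hgann : (aeval A g) *ᵥ w = 0 := by
      have hev : aeval A g = ∑ j : Fin n, c j • A ^ (j : ℕ) := by
        rw [hg, map_sum]
        congr 1
        ext j
        rw [_root_.map_mul, aeval_C, map_pow, aeval_X, Algebra.algebraMap_eq_smul_one,
          smul_mul_assoc, one_mul]
      have hsm : (∑ j : Fin n, c j • A ^ (j : ℕ)) *ᵥ w
          = ∑ j : Fin n, (c j • A ^ (j : ℕ)) *ᵥ w :=
        map_sum (AddMonoidHom.mk' (fun M : Matrix (Fin n) (Fin n) L => M *ᵥ w)
          (fun M N => Matrix.add_mulVec M N w)) _ Finset.univ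
      rw [hev, hsm]
      simp only [smul_mulVec]
      exact hc
    have hgzero : g = 0 := by
      by_contra h0
      have hle := Polynomial.natDegree_le_of_dvd (hkey g hgann) h0
      have hlt : g.natDegree < n := by
        have hle' : g.natDegree ≤ n - 1 := by
          apply Polynomial.natDegree_sum_le_of_forall_le
          intro j _
          exact (Polynomial.natDegree_C_mul_X_pow_le (c j) (j : ℕ)).trans
            (by have := j.2; omega)
        omega
      omega
    intro i
    have := congrArg (fun q => Polynomial.coeff q (i : ℕ)) hgzero
    simp only [hg, Polynomial.finset_sum_coeff, Polynomial.coeff_C_mul_X_pow,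
      Polynomial.coeff_zero] at this
    rwa [Finset.sum_eq_single_of_mem i (Finset.mem_univ i) (fun j _ hji => by
      rw [if_neg (fun hc' : (i : ℕ) = (j : ℕ) => hji (Fin.ext hc'.symm))]), if_pos rfl] at this
  have hspan := hli.span_eq_top_of_card_eq_finrank'
    (by simp [Module.finrank_pi])
  refine ⟨w, top_unique ?_⟩
  rw [← hspan]
  apply Submodule.span_mono
  rintro _ ⟨i, rfl⟩
  exact ⟨(i : ℕ), rfl⟩

private lemma skew_zero {L : Type*} [Field L] {n : ℕ} (A γ : Matrix (Fin n) (Fin n) L)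
    (h2 : (2 : L) ≠ 0) (hmin : A.charpoly = minpoly L A)
    (hcomm : Aᵀ * γ = γ * A) (hskew : γᵀ = -γ) : γ = 0 := by
  obtain ⟨w, hw⟩ := exists_cyclic_s5 A hmin
  have hpow : ∀ i : ℕ, (Aᵀ) ^ i * γ = γ * A ^ i := by
    intro i
    induction i with
    | zero => simp
    | succ m ih =>
        rw [pow_succ, pow_succ, mul_assoc, hcomm, ← mul_assoc, ih, mul_assoc]
  have hmove : ∀ (M : Matrix (Fin n) (Fin n) L) (u z : Fin n → L),
      (M *ᵥ u) ⬝ᵥ z = u ⬝ᵥ (Mᵀ *ᵥ z) := by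
    intro M u z
    rw [dotProduct_comm, Matrix.dotProduct_mulVec, ← Matrix.mulVec_transpose, dotProduct_comm]
  -- the basic bilinear quantity
  have hBval : ∀ i j : ℕ, ((A ^ i) *ᵥ w) ⬝ᵥ (γ *ᵥ ((A ^ j) *ᵥ w))
      = w ⬝ᵥ ((γ * A ^ (i + j)) *ᵥ w) := by
    intro i j
    rw [Matrix.mulVec_mulVec, hmove, Matrix.mulVec_mulVec, Matrix.transpose_pow,
      ← mul_assoc, hpow i, mul_assoc, ← pow_add]
  have hBzero : ∀ i j : ℕ, ((A ^ i) *ᵥ w) ⬝ᵥ (γ *ᵥ ((A ^ j) *ᵥ w)) = 0 := by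
    intro i j
    have hsym : ((A ^ i) *ᵥ w) ⬝ᵥ (γ *ᵥ ((A ^ j) *ᵥ w))
        = ((A ^ j) *ᵥ w) ⬝ᵥ (γ *ᵥ ((A ^ i) *ᵥ w)) := by
      rw [hBval, hBval, Nat.add_comm]
    have hneg : ((A ^ i) *ᵥ w) ⬝ᵥ (γ *ᵥ ((A ^ j) *ᵥ w))
        = -(((A ^ j) *ᵥ w) ⬝ᵥ (γ *ᵥ ((A ^ i) *ᵥ w))) := by
      have hγ : γ = -γᵀ := by rw [hskew, neg_neg]
      calc ((A ^ i) *ᵥ w) ⬝ᵥ (γ *ᵥ ((A ^ j) *ᵥ w))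
          = ((A ^ i) *ᵥ w) ⬝ᵥ ((-γᵀ) *ᵥ ((A ^ j) *ᵥ w)) := by rw [← hγ]
        _ = -(((A ^ i) *ᵥ w) ⬝ᵥ (γᵀ *ᵥ ((A ^ j) *ᵥ w))) := by
            rw [Matrix.neg_mulVec, dotProduct_neg]
        _ = -((γ *ᵥ ((A ^ i) *ᵥ w)) ⬝ᵥ ((A ^ j) *ᵥ w)) := by rw [← hmove γ]
        _ = -(((A ^ j) *ᵥ w) ⬝ᵥ (γ *ᵥ ((A ^ i) *ᵥ w))) := by rw [dotProduct_comm]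
    have h2B : (2 : L) * (((A ^ i) *ᵥ w) ⬝ᵥ (γ *ᵥ ((A ^ j) *ᵥ w))) = 0 := by
      rw [two_mul]
      nth_rewrite 2 [hneg]
      rw [hsym]
      ring
    rcases mul_eq_zero.mp h2B with h | h
    · exact absurd h h2
    · exact h
  -- γ kills every A^j *ᵥ w
  have hcol : ∀ j : ℕ, γ *ᵥ ((A ^ j) *ᵥ w) = 0 := by
    intro j
    have hall : ∀ u : Fin n → L, u ⬝ᵥ (γ *ᵥ ((A ^ j) *ᵥ w)) = 0 := by
      intro u
      have hu : u ∈ Submodule.span L (Set.range fun i : ℕ => (A ^ i) *ᵥ w) := by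
        rw [hw]; trivial
      induction hu using Submodule.span_induction with
      | mem z hz =>
          obtain ⟨i, rfl⟩ := hz
          exact hBzero i j
      | zero => rw [zero_dotProduct]
      | add a b _ _ ha hb => rw [add_dotProduct, ha, hb, add_zero]
      | smul c a _ ha => rw [smul_dotProduct, ha, smul_zero]
    ext i
    have := hall (Pi.single i 1)
    rwa [single_dotProduct, one_mul] at this
  have hvec : ∀ u : Fin n → L, γ *ᵥ u = 0 := by
    intro u
    have hu : u ∈ Submodule.span L (Set.range fun i : ℕ => (A ^ i) *ᵥ w) := by
      rw [hw]; trivial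
    induction hu using Submodule.span_induction with
    | mem z hz =>
        obtain ⟨i, rfl⟩ := hz
        exact hcol i
    | zero => rw [Matrix.mulVec_zero]
    | add a b _ _ ha hb => rw [Matrix.mulVec_add, ha, hb, add_zero]
    | smul c a _ ha => rw [Matrix.mulVec_smul, ha, smul_zero]
  ext i j
  have := congrFun (hvec (Pi.single j 1)) i
  simpa [Matrix.mulVec_single] using this

/-- For `A ∈ SU(H)` with characteristic polynomial equal to its minimal
polynomial, `Ā` is conjugate to `A⁻¹` by an element of `SU(H)` iff `A = A₁ A₂` with
`A₁, A₂ ∈ SU(H)` satisfying `Ā₁ A₁ = I = Ā₂ A₂`. -/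
theorem stmt5 {k L : Type*} [Field k] [Field L] [Algebra k L]
    (hchar : (2 : k) ≠ 0) (hquad : Module.finrank k L = 2)
    (σ : L ≃ₐ[k] L) (hσ : σ ≠ AlgEquiv.refl)
    {n : ℕ} (lam : Fin n → k) (hlam : ∀ i, lam i ≠ 0)
    (H : Matrix (Fin n) (Fin n) L)
    (hH : H = Matrix.diagonal fun i => algebraMap k L (lam i))
    (A : Matrix (Fin n) (Fin n) L) (hA_unit : IsUnit A)
    (hA_U : Aᵀ * H * A.map σ = H) (hA_det : A.det = 1)
    (hmin : A.charpoly = minpoly L A) :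
    (∃ X : Matrix (Fin n) (Fin n) L, IsUnit X ∧ Xᵀ * H * X.map σ = H ∧ X.det = 1 ∧
        X * A.map σ * X⁻¹ = A⁻¹) ↔
    (∃ A₁ A₂ : Matrix (Fin n) (Fin n) L,
        IsUnit A₁ ∧ A₁ᵀ * H * A₁.map σ = H ∧ A₁.det = 1 ∧
        IsUnit A₂ ∧ A₂ᵀ * H * A₂.map σ = H ∧ A₂.det = 1 ∧
        A = A₁ * A₂ ∧ (A₁.map σ) * A₁ = 1 ∧ (A₂.map σ) * A₂ = 1) := by
  classical
  have hσσ : ∀ y : L, σ (σ y) = y := sigma_invol_s5 hquad σ hσ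
  have hinj : Function.Injective (algebraMap k L) := (algebraMap k L).injective
  -- generic matrix-map facts
  have hmapmul : ∀ M N : Matrix (Fin n) (Fin n) L, (M * N).map ⇑σ = M.map ⇑σ * N.map ⇑σ := by
    intro M N
    ext i j
    simp [Matrix.mul_apply, Matrix.map_apply, map_sum]
  have hmapone : (1 : Matrix (Fin n) (Fin n) L).map ⇑σ = 1 := by
    ext i j
    simp [Matrix.map_apply, Matrix.one_apply, apply_ite]
  have hmapmap : ∀ M : Matrix (Fin n) (Fin n) L, (M.map ⇑σ).map ⇑σ = M := by
    intro M
    ext i j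
    simp [Matrix.map_apply, hσσ]
  have hmaptrans : ∀ M : Matrix (Fin n) (Fin n) L, (Mᵀ).map ⇑σ = (M.map ⇑σ)ᵀ := by
    intro M
    ext i j
    simp [Matrix.map_apply]
  have hHmap : H.map ⇑σ = H := by
    rw [hH]
    ext i j
    by_cases h : i = j
    · subst h
      simp [Matrix.map_apply, AlgEquiv.commutes]
    · simp [Matrix.map_apply, Matrix.diagonal_apply_ne _ h]
  have hHT : Hᵀ = H := by rw [hH]; exact Matrix.diagonal_transpose _
  have hHdet : IsUnit H.det := by
    rw [hH, Matrix.det_diagonal]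
    apply isUnit_iff_ne_zero.mpr
    apply Finset.prod_ne_zero_iff.mpr
    intro i _
    intro h0
    exact hlam i (hinj (by rw [h0, map_zero]))
  constructor
  · rintro ⟨X, hXu, hXU, hXdet, hXconj⟩
    have hXd : IsUnit X.det := (Matrix.isUnit_iff_isUnit_det X).mp hXu
    have hAd : IsUnit A.det := (Matrix.isUnit_iff_isUnit_det A).mp hA_unit
    have hXi : X⁻¹ * X = 1 := Matrix.nonsing_inv_mul X hXd
    have hXi' : X * X⁻¹ = 1 := Matrix.mul_nonsing_inv X hXd
    have hAi : A⁻¹ * A = 1 := Matrix.nonsing_inv_mul A hAd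
    have hAi' : A * A⁻¹ = 1 := Matrix.mul_nonsing_inv A hAd
    -- (1) : X * Ā = A⁻¹ * X
    have h1 : X * A.map ⇑σ = A⁻¹ * X := by
      calc X * A.map ⇑σ = X * A.map ⇑σ * (X⁻¹ * X) := by rw [hXi, mul_one]
        _ = X * A.map ⇑σ * X⁻¹ * X := by simp only [mul_assoc]
        _ = A⁻¹ * X := by rw [hXconj]
    -- (Ā)⁻¹ = (A⁻¹).map σ
    have hAone : A.map ⇑σ * (A⁻¹).map ⇑σ = 1 := by rw [← hmapmul, hAi', hmapone]
    have hAbarInv : (A.map ⇑σ)⁻¹ = (A⁻¹).map ⇑σ := Matrix.inv_eq_right_inv hAone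
    have hAmd : IsUnit (A.map ⇑σ).det := by
      apply IsUnit.of_mul_eq_one ((A⁻¹).map ⇑σ).det
      rw [← Matrix.det_mul, hAone, Matrix.det_one]
    have hAbi' : A.map ⇑σ * (A.map ⇑σ)⁻¹ = 1 := Matrix.mul_nonsing_inv _ hAmd
    -- (2) : X̄ * A = Ā⁻¹ * X̄
    have h2 : X.map ⇑σ * A = (A.map ⇑σ)⁻¹ * X.map ⇑σ := by
      have := congrArg (fun M => M.map ⇑σ) h1
      simp only [hmapmul] at this
      rw [hmapmap] at this
      rw [hAbarInv]
      exact this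
    -- bar of unitarity of X : X̄ᵀ * H * X = H
    have hXU' : (X.map ⇑σ)ᵀ * H * X = H := by
      have := congrArg (fun M => M.map ⇑σ) hXU
      simp only [hmapmul] at this
      rw [hmaptrans, hmapmap, hHmap] at this
      exact this
    set M : Matrix (Fin n) (Fin n) L := H * X.map ⇑σ with hM
    have hMT : Mᵀ = H * X⁻¹ := by
      rw [hM, Matrix.transpose_mul, hHT]
      calc (X.map ⇑σ)ᵀ * H = (X.map ⇑σ)ᵀ * H * (X * X⁻¹) := by rw [hXi', mul_one]
        _ = (X.map ⇑σ)ᵀ * H * X * X⁻¹ := by simp only [mul_assoc]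
        _ = H * X⁻¹ := by rw [hXU']
    have hAM : Aᵀ * M = M * A := by
      have hAH : Aᵀ * H = H * (A.map ⇑σ)⁻¹ := by
        calc Aᵀ * H = Aᵀ * H * (A.map ⇑σ * (A.map ⇑σ)⁻¹) := by rw [hAbi', mul_one]
          _ = Aᵀ * H * A.map ⇑σ * (A.map ⇑σ)⁻¹ := by simp only [mul_assoc]
          _ = H * (A.map ⇑σ)⁻¹ := by rw [hA_U]
      calc Aᵀ * (H * X.map ⇑σ) = Aᵀ * H * X.map ⇑σ := by rw [mul_assoc]
        _ = H * (A.map ⇑σ)⁻¹ * X.map ⇑σ := by rw [hAH]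
        _ = H * ((A.map ⇑σ)⁻¹ * X.map ⇑σ) := by rw [mul_assoc]
        _ = H * (X.map ⇑σ * A) := by rw [← h2]
        _ = H * X.map ⇑σ * A := by rw [mul_assoc]
    have h2L : (2 : L) ≠ 0 := by
      intro h0
      apply hchar
      apply hinj
      rw [map_ofNat, map_zero]
      exact h0
    have hγ : M - Mᵀ = 0 := by
      apply skew_zero A (M - Mᵀ) h2L hmin
      · have hMTA : Mᵀ * A = Aᵀ * Mᵀ := by
          have h := congrArg Matrix.transpose hAM
          rw [Matrix.transpose_mul Aᵀ M, Matrix.transpose_mul M A,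
            Matrix.transpose_transpose A] at h
          exact h
        rw [Matrix.mul_sub, Matrix.sub_mul, hAM, hMTA]
      · rw [Matrix.transpose_sub, Matrix.transpose_transpose]
        exact (neg_sub _ _).symm
    have hMeq : M = Mᵀ := by
      have := sub_eq_zero.mp hγ
      exact this
    -- X̄ = X⁻¹
    have hXbar : X.map ⇑σ = X⁻¹ := by
      have hHX : H * X.map ⇑σ = H * X⁻¹ := by rw [← hM, hMeq, hMT]
      calc X.map ⇑σ = 1 * X.map ⇑σ := (one_mul _).symm
        _ = H⁻¹ * H * X.map ⇑σ := by rw [Matrix.nonsing_inv_mul H hHdet]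
        _ = H⁻¹ * (H * X.map ⇑σ) := by rw [mul_assoc]
        _ = H⁻¹ * (H * X⁻¹) := by rw [hHX]
        _ = H⁻¹ * H * X⁻¹ := by rw [mul_assoc]
        _ = X⁻¹ := by rw [Matrix.nonsing_inv_mul H hHdet, one_mul]
    -- construct the decomposition
    refine ⟨X, X⁻¹ * A, hXu, hXU, hXdet, ?_, ?_, ?_, ?_, ?_, ?_⟩
    · apply (Matrix.isUnit_iff_isUnit_det _).mpr
      rw [Matrix.det_mul, Matrix.det_nonsing_inv, hXdet, hA_det, Ring.inverse_one, one_mul]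
      exact isUnit_one
    · have hXinvmap : (X⁻¹).map ⇑σ = X := by
        rw [← hXbar, hmapmap]
      rw [Matrix.transpose_mul, hmapmul, hXinvmap]
      calc Aᵀ * (X⁻¹)ᵀ * H * (X * A.map ⇑σ)
          = Aᵀ * ((X⁻¹)ᵀ * H * X) * A.map ⇑σ := by simp only [mul_assoc]
        _ = Aᵀ * H * A.map ⇑σ := by rw [← hXbar, hXU']
        _ = H := hA_U
    · rw [Matrix.det_mul, Matrix.det_nonsing_inv, hXdet, hA_det, Ring.inverse_one, one_mul]
    · rw [← mul_assoc, hXi', one_mul]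
    · rw [hXbar, hXi]
    · have hXinvmap : (X⁻¹).map ⇑σ = X := by rw [← hXbar, hmapmap]
      rw [hmapmul, hXinvmap]
      calc X * A.map ⇑σ * (X⁻¹ * A) = X * A.map ⇑σ * X⁻¹ * A := by simp only [mul_assoc]
        _ = A⁻¹ * A := by rw [hXconj]
        _ = 1 := hAi
  · rintro ⟨A₁, A₂, h1u, h1U, h1d, h2u, h2U, h2d, hA12, hb1, hb2⟩
    have h1dd : IsUnit A₁.det := (Matrix.isUnit_iff_isUnit_det A₁).mp h1u
    have h2dd : IsUnit A₂.det := (Matrix.isUnit_iff_isUnit_det A₂).mp h2u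
    have hbar1 : A₁⁻¹ = A₁.map ⇑σ := Matrix.inv_eq_left_inv hb1
    have hbar2 : A₂⁻¹ = A₂.map ⇑σ := Matrix.inv_eq_left_inv hb2
    refine ⟨A₁, h1u, h1U, h1d, ?_⟩
    rw [hA12, hmapmul, ← hbar1, ← hbar2, Matrix.mul_inv_rev]
    calc A₁ * (A₁⁻¹ * A₂⁻¹) * A₁⁻¹ = A₁ * A₁⁻¹ * A₂⁻¹ * A₁⁻¹ := by simp only [mul_assoc]
      _ = A₂⁻¹ * A₁⁻¹ := by rw [Matrix.mul_nonsing_inv A₁ h1dd, one_mul]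
end
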